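/- In a strong tournament, the non-decreasing score sequence s_1 ≤ ... ≤ s_n satisfies the strict Landau inequalities: for every k with 1 ≤ k ≤ n-1, s_1 + ... + s_k ≥ C(k,2) + 1, and s_1 + ... + s_n = C(n,2). -/
import Mathlib


/-- A set `W` of vertices is acyclic if the digraph `r` restricted to `W`
has no directed cycle (the transitive closure restricted to `W` is irreflexive). -/
def AcyclicOn {V : Type*} (r : V → V → Prop) (W : Set V) : Prop :=
  ∀ v : V, ¬ Relation.TransGen (fun a b => a ∈ W ∧ b ∈ W ∧ r a b) v v

/-- A tournament: an irreflexive relation with exactly one arc between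
every pair of distinct vertices. -/
def IsTournament {V : Type*} (r : V → V → Prop) : Prop :=
  (∀ v : V, ¬ r v v) ∧ ∀ u v : V, u ≠ v → (r u v ↔ ¬ r v u)

/-- A feedback vertex set: its deletion leaves an acyclic digraph. -/
def IsFVS {V : Type*} (r : V → V → Prop) (F : Set V) : Prop :=
  AcyclicOn r Fᶜ

/-- A minimal feedback vertex set. -/
def IsMinimalFVS {V : Type*} (r : V → V → Prop) (F : Set V) : Prop :=
  IsFVS r F ∧ ∀ F' : Set V, F' ⊆ F → IsFVS r F' → F' = F

/-- A feedback vertex set of the subtournament induced on `S`. -/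
def IsFVSOn {V : Type*} (r : V → V → Prop) (S F : Set V) : Prop :=
  F ⊆ S ∧ AcyclicOn r (S \ F)

/-- A minimal feedback vertex set of the subtournament induced on `S`. -/
def IsMinimalFVSOn {V : Type*} (r : V → V → Prop) (S F : Set V) : Prop :=
  IsFVSOn r S F ∧ ∀ F' : Set V, F' ⊆ F → IsFVSOn r S F' → F' = F

/-- Strong (strongly connected): a directed path between any ordered pair. -/
def IsStrong {V : Type*} (r : V → V → Prop) : Prop :=
  ∀ u v : V, Relation.ReflTransGen r u v

/-- The subtournament induced on `S` is strong. -/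
def IsStrongOn {V : Type*} (r : V → V → Prop) (S : Set V) : Prop :=
  ∀ u ∈ S, ∀ v ∈ S, Relation.ReflTransGen (fun a b => a ∈ S ∧ b ∈ S ∧ r a b) u v

/-- The score (out-degree) of a vertex. -/
noncomputable def outScore {V : Type*} (r : V → V → Prop) (v : V) : ℕ :=
  {u : V | r v u}.ncard

/-- The number of minimal feedback vertex sets of a tournament. -/
noncomputable def fvsCount (V : Type*) (r : V → V → Prop) : ℕ :=
  {F : Set V | IsMinimalFVS r F}.ncard

/-- `maxMinFVS n` = maximum number of minimal FVSs over all `n`-vertex tournaments. -/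
noncomputable def maxMinFVS (n : ℕ) : ℕ :=
  sSup {k : ℕ | ∃ r : Fin n → Fin n → Prop, IsTournament r ∧ fvsCount (Fin n) r = k}



open Finset in
private lemma innerCount {V : Type*} [DecidableEq V] {r : V → V → Prop}
    [DecidableRel r] (hT : IsTournament r) (S : Finset V) :
    ∑ v ∈ S, (S.filter (fun u => r v u)).card = S.card.choose 2 := by
  set X := ∑ v ∈ S, (S.filter (fun u => r v u)).card with hXdef
  have h1 : X = ∑ v ∈ S, ∑ u ∈ S, (if r v u then 1 else 0) := by
    rw [hXdef]
    exact Finset.sum_congr rfl fun v _ => by rw [Finset.card_filter]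
  have h2 : X = ∑ v ∈ S, ∑ u ∈ S, (if r u v then 1 else 0) := by
    rw [h1, Finset.sum_comm]
  have h3 : 2 * X = S.card * (S.card - 1) := by
    have : 2 * X = ∑ v ∈ S, ∑ u ∈ S,
        ((if r v u then 1 else 0) + (if r u v then 1 else 0)) := by
      rw [two_mul]
      nth_rewrite 1 [h1]
      rw [h2, ← Finset.sum_add_distrib]
      refine Finset.sum_congr rfl fun v _ => ?_
      rw [← Finset.sum_add_distrib]
    rw [this]
    have hpt : ∀ v ∈ S, (∑ u ∈ S,
        ((if r v u then 1 else 0) + (if r u v then 1 else 0))) = S.card - 1 := by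
      intro v hv
      have : ∀ u ∈ S, ((if r v u then 1 else 0) + (if r u v then 1 else 0))
          = if v ≠ u then 1 else 0 := by
        intro u _
        by_cases h : v = u
        · subst h; simp [hT.1 v]
        · have := (hT.2 v u h)
          by_cases hr : r v u
          · simp [hr, (this.mp hr), h]
          · have : r u v := by
              by_contra hru
              exact hr (this.mpr hru)
            simp [hr, this, h]
      rw [Finset.sum_congr rfl this, ← Finset.card_filter, Finset.filter_ne,
        Finset.card_erase_of_mem hv]
    rw [Finset.sum_congr rfl hpt, Finset.sum_const, smul_eq_mul]
  have hc2 : S.card.choose 2 = S.card * (S.card - 1) / 2 := Nat.choose_two_right S.card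
  set m := S.card * (S.card - 1)
  omega

private lemma crossArc {V : Type*} {r : V → V → Prop} (hS : IsStrong r) (S : Set V)
    {u v : V} (hu : u ∈ S) (hv : v ∉ S) :
    ∃ a ∈ S, ∃ b, b ∉ S ∧ r a b := by
  have key : ∀ w, Relation.ReflTransGen r u w → w ∉ S → ∃ a ∈ S, ∃ b, b ∉ S ∧ r a b := by
    intro w h
    induction h with
    | refl => exact fun hw => absurd hu hw
    | @tail b c h1 h2 ih =>
      intro hc
      by_cases hb : b ∈ S
      · exact ⟨b, hb, c, hc, h2⟩
      · exact ih hb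
  exact key v (hS u v) hv

open Finset in
private lemma cardFilterLt (n k : ℕ) (hk : k ≤ n) :
    ((univ : Finset (Fin n)).filter (fun i : Fin n => (i : ℕ) < k)).card = k := by
  have himg : ((univ : Finset (Fin n)).filter (fun i : Fin n => (i : ℕ) < k)).image Fin.val
      = Finset.range k := by
    ext m
    simp only [Finset.mem_image, Finset.mem_filter, Finset.mem_univ, true_and,
      Finset.mem_range]
    constructor
    · rintro ⟨i, hi, rfl⟩; exact hi
    · intro hm; exact ⟨⟨m, lt_of_lt_of_le hm hk⟩, hm, rfl⟩
  rw [← Finset.card_image_of_injective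
      ((univ : Finset (Fin n)).filter (fun i : Fin n => (i : ℕ) < k)) Fin.val_injective,
    himg, Finset.card_range]


/-- Landau's inequalities for strong tournaments: for a non-decreasing enumeration
of the scores, every proper initial segment sums to at least `C(k,2) + 1`, and all
scores sum to `C(n,2)`. -/
theorem stmt13 {V : Type*} [Fintype V] (n : ℕ) (hcard : Fintype.card V = n)
    (r : V → V → Prop) (hT : IsTournament r) (hS : IsStrong r)
    (e : Fin n ≃ V) (hmono : Monotone fun i : Fin n => outScore r (e i)) :
    (∀ k : ℕ, 1 ≤ k → k ≤ n - 1 →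
      k.choose 2 + 1 ≤ ∑ i : Fin n, if (i : ℕ) < k then outScore r (e i) else 0) ∧
    (∑ i : Fin n, outScore r (e i)) = n.choose 2 := by
  classical
  subst hcard
  have houts : ∀ v : V, outScore r v = (Finset.univ.filter (fun u => r v u)).card := by
    intro v
    rw [outScore, Set.ncard_eq_toFinset_card']
    simp [Set.toFinset_setOf]
  constructor
  · intro k hk1 hk2
    have hn2 : 2 ≤ Fintype.card V := by omega
    set T : Finset (Fin (Fintype.card V)) := Finset.univ.filter (fun i : Fin (Fintype.card V) => (i : ℕ) < k) with hTdef
    set S : Finset V := T.image e with hSdef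
    have hinj : Function.Injective e := e.injective
    have hTcard : T.card = k := cardFilterLt (Fintype.card V) k (by omega)
    have hScard : S.card = k := by
      rw [hSdef, Finset.card_image_of_injective _ hinj, hTcard]
    have hsum : ∑ v ∈ S, outScore r v
        = ∑ i : Fin (Fintype.card V), if (i : ℕ) < k then outScore r (e i) else 0 := by
      rw [hSdef, Finset.sum_image (fun a _ b _ h => hinj h), hTdef, Finset.sum_filter]
    rw [← hsum]
    have hsplit : ∀ v : V, (Finset.univ.filter (fun u => r v u)).card
        = (S.filter (fun u => r v u)).card + (Sᶜ.filter (fun u => r v u)).card := by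
      intro v
      rw [← Finset.card_union_of_disjoint
          (Finset.disjoint_filter_filter disjoint_compl_right),
        ← Finset.filter_union, Finset.union_compl]
    have hexp : ∑ v ∈ S, outScore r v
        = (∑ v ∈ S, (S.filter (fun u => r v u)).card)
          + ∑ v ∈ S, (Sᶜ.filter (fun u => r v u)).card := by
      rw [← Finset.sum_add_distrib]
      exact Finset.sum_congr rfl fun v _ => by rw [houts v, hsplit v]
    have hSne : S.Nonempty := Finset.card_pos.mp (by omega)
    have hScne : Sᶜ.Nonempty := by
      refine Finset.card_pos.mp ?_
      rw [Finset.card_compl, hScard]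
      omega
    obtain ⟨u0, hu0⟩ := hSne
    obtain ⟨v0, hv0⟩ := hScne
    have hv0' : v0 ∉ S := Finset.mem_compl.mp hv0
    obtain ⟨a, ha, b, hb, hab⟩ := crossArc hS (↑S : Set V)
      (by exact_mod_cast hu0) (by simpa using hv0')
    have hb' : b ∉ S := by simpa using hb
    have ha' : a ∈ S := by exact_mod_cast ha
    have houter : 1 ≤ ∑ v ∈ S, (Sᶜ.filter (fun u => r v u)).card := by
      have h1 : 1 ≤ (Sᶜ.filter (fun u => r a u)).card :=
        Finset.card_pos.mpr ⟨b, Finset.mem_filter.mpr ⟨Finset.mem_compl.mpr hb', hab⟩⟩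
      exact le_trans h1 (Finset.single_le_sum (f := fun v => (Sᶜ.filter (fun u => r v u)).card) (fun i _ => Nat.zero_le _) ha')
    rw [hexp, innerCount hT S, hScard]
    omega
  · rw [Equiv.sum_comp e (outScore r)]
    have := innerCount hT (Finset.univ : Finset V)
    rw [Finset.card_univ] at this
    rw [← this]
    exact Finset.sum_congr rfl fun v _ => houts v
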